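/- Let G be a torsion-free nilpotent group. Then for every g ∈ G and every integer k ≠ 0, the centralizer of g^k in G equals the centralizer of g in G: C_G(g) = C_G(g^k). -/

import Mathlib

private lemma tf_pow_eq_one {G : Type*} [Group G] (htf : (∀ g : G, g ≠ 1 → ¬IsOfFinOrder g))
    {x : G} {n : ℕ} (hn : n ≠ 0) (h : x ^ n = 1) : x = 1 := by
  by_contra hx
  exact htf x hx (isOfFinOrder_iff_pow_eq_one.mpr ⟨n, Nat.pos_of_ne_zero hn, h⟩)

private lemma conj_pow_aux {G : Type*} [Group G] (h g : G) (m : ℕ) :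
    (h * g * h⁻¹) ^ m = h * g ^ m * h⁻¹ := by
  induction m with
  | zero => simp
  | succ m ih => rw [pow_succ, ih, pow_succ]; group

/-- Step lemma: if `x ∈ Z_{i+1}` and `x^n ∈ Z_i` (n ≠ 0), then `x ∈ Z_i`. -/
private lemma ucs_isolated_step {G : Type*} [Group G] (htf : (∀ g : G, g ≠ 1 → ¬IsOfFinOrder g)) :
    ∀ (i : ℕ) (x : G) (n : ℕ), n ≠ 0 → x ∈ Subgroup.upperCentralSeries G (i + 1) →
      x ^ n ∈ Subgroup.upperCentralSeries G i → x ∈ Subgroup.upperCentralSeries G i := by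
  intro i
  induction i with
  | zero =>
    intro x n hn _ hxn
    rw [Subgroup.upperCentralSeries_zero, Subgroup.mem_bot] at hxn ⊢
    exact tf_pow_eq_one htf hn hxn
  | succ i ih =>
    intro x n hn hx hxn
    rw [Subgroup.mem_upperCentralSeries_succ_iff]
    intro g
    set N := Subgroup.upperCentralSeries G i with hN
    set a := x * g * x⁻¹ * g⁻¹ with ha
    have haZ : a ∈ Subgroup.upperCentralSeries G (i + 1) :=
      (Subgroup.mem_upperCentralSeries_succ_iff.mp hx) g
    let π := QuotientGroup.mk' N
    have hker : ∀ y : G, π y = 1 ↔ y ∈ N := fun y => QuotientGroup.eq_one_iff y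
    have hcomm : ∀ y : G, π a * π y = π y * π a := by
      intro y
      have hmem : a * y * a⁻¹ * y⁻¹ ∈ N := (Subgroup.mem_upperCentralSeries_succ_iff.mp haZ) y
      have h1 : π a * π y * (π a)⁻¹ * (π y)⁻¹ = 1 := by
        have := (hker _).mpr hmem
        simpa [map_mul] using this
      have := mul_eq_one_iff_eq_inv.mp h1
      calc π a * π y = (π a * π y * (π a)⁻¹ * (π y)⁻¹) * (π y * π a) := by group
        _ = π y * π a := by rw [h1]; group
    have hxg : π x * π g = π a * (π g * π x) := by
      have hx2 : x * g = a * (g * x) := by rw [ha]; group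
      calc π x * π g = π (x * g) := by rw [map_mul]
        _ = π (a * (g * x)) := by rw [hx2]
        _ = π a * (π g * π x) := by simp [map_mul]
    have hpow : ∀ m : ℕ, π x ^ m * π g = π a ^ m * (π g * π x ^ m) := by
      intro m
      induction m with
      | zero => simp
      | succ m ihm =>
        have hC : Commute (π a) (π x) := hcomm x
        have hAx : π a ^ m * π x = π x * π a ^ m := (hC.pow_left m).eq
        calc π x ^ (m + 1) * π g = π x * (π x ^ m * π g) := by rw [pow_succ']; group
          _ = π x * (π a ^ m * (π g * π x ^ m)) := by rw [ihm]
          _ = (π x * π a ^ m) * (π g * π x ^ m) := by group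
          _ = (π a ^ m * π x) * (π g * π x ^ m) := by rw [hAx]
          _ = π a ^ m * ((π x * π g) * π x ^ m) := by group
          _ = π a ^ m * ((π a * (π g * π x)) * π x ^ m) := by rw [hxg]
          _ = π a ^ (m + 1) * (π g * π x ^ (m + 1)) := by rw [pow_succ, pow_succ']; group
    have hxn' : π g * π x ^ n = π x ^ n * π g := by
      have hmem : x ^ n * g * (x ^ n)⁻¹ * g⁻¹ ∈ N := (Subgroup.mem_upperCentralSeries_succ_iff.mp hxn) g
      have h1 : π (x ^ n) * π g * (π (x ^ n))⁻¹ * (π g)⁻¹ = 1 := by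
        have := (hker _).mpr hmem
        simpa [map_mul] using this
      have h2 : π (x ^ n) * π g = π g * π (x ^ n) := by
        calc π (x ^ n) * π g
            = (π (x ^ n) * π g * (π (x ^ n))⁻¹ * (π g)⁻¹) * (π g * π (x ^ n)) := by group
          _ = π g * π (x ^ n) := by rw [h1]; group
      rw [map_pow] at h2
      exact h2.symm
    have han : π a ^ n = 1 := by
      have h2 := hpow n
      rw [← hxn'] at h2
      exact right_eq_mul.mp h2
    have hanN : a ^ n ∈ N := (hker _).mp (by rw [map_pow]; exact han)
    exact ih a n hn haZ hanN

private lemma unique_roots {G : Type*} [Group G] (htf : (∀ g : G, g ≠ 1 → ¬IsOfFinOrder g))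
    [Group.IsNilpotent G] {x y : G} {n : ℕ} (hn : n ≠ 0) (h : x ^ n = y ^ n) : x = y := by
  obtain ⟨c, hc⟩ := Group.IsNilpotent.nilpotent G
  have main : ∀ j : ℕ, x⁻¹ * y ∈ Subgroup.upperCentralSeries G j → x⁻¹ * y = 1 := by
    intro j
    induction j with
    | zero => intro hz; rwa [Subgroup.upperCentralSeries_zero, Subgroup.mem_bot] at hz
    | succ j ih =>
      intro hz
      set z := x⁻¹ * y with hzdef
      set N := Subgroup.upperCentralSeries G j with hN
      let π := QuotientGroup.mk' N
      have hker : ∀ w : G, π w = 1 ↔ w ∈ N := fun w => QuotientGroup.eq_one_iff w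
      have hcomm : Commute (π x) (π z) := by
        have hmem : z * x * z⁻¹ * x⁻¹ ∈ N := (Subgroup.mem_upperCentralSeries_succ_iff.mp hz) x
        have h1 : π z * π x * (π z)⁻¹ * (π x)⁻¹ = 1 := by
          have := (hker _).mpr hmem
          simpa [map_mul] using this
        have h2 : π z * π x = π x * π z := by
          calc π z * π x = (π z * π x * (π z)⁻¹ * (π x)⁻¹) * (π x * π z) := by group
            _ = π x * π z := by rw [h1]; group
        exact h2.symm
      have hy : π y = π x * π z := by
        rw [hzdef, map_mul, map_inv]; group
      have hzn : π z ^ n = 1 := by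
        have h3 : π y ^ n = π x ^ n * π z ^ n := by rw [hy, hcomm.mul_pow]
        have h2 : π x ^ n = π y ^ n := by rw [← map_pow, ← map_pow, h]
        rw [← h2] at h3
        exact left_eq_mul.mp h3
      have hznN : z ^ n ∈ N := (hker _).mp (by rw [map_pow]; exact hzn)
      exact ih (ucs_isolated_step htf j z n hn hz hznN)
  exact inv_mul_eq_one.mp (main c (by rw [hc]; trivial))

theorem centralizer_pow_eq_of_torsionFree_nilpotent {G : Type*} [Group G]
    (htf : (∀ g : G, g ≠ 1 → ¬IsOfFinOrder g)) [Group.IsNilpotent G]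
    (g : G) (k : ℤ) (hk : k ≠ 0) :
    Subgroup.centralizer {g} = Subgroup.centralizer {g ^ k} := by
  have key : ∀ (h : G) (m : ℕ), m ≠ 0 → Commute h (g ^ m) → h * g = g * h := by
    intro h m hm hcom
    have h1 : (h * g * h⁻¹) ^ m = g ^ m := by
      rw [conj_pow_aux, hcom.eq]
      group
    have h2 : h * g * h⁻¹ = g := unique_roots htf hm h1
    calc h * g = (h * g * h⁻¹) * h := by group
      _ = g * h := by rw [h2]
  ext h
  simp only [Subgroup.mem_centralizer_singleton_iff]
  constructor
  · intro hc
    have hC : Commute g h := hc.symm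
    exact (hC.zpow_left k).eq.symm
  · intro hc
    have hcom : Commute h (g ^ k) := hc
    rcases lt_or_gt_of_ne hk with hneg | hpos
    · have h2 : Commute h (g ^ (-k).toNat) := by
        have := hcom.inv_right
        rwa [← zpow_neg, ← Int.toNat_of_nonneg (by omega : (0:ℤ) ≤ -k), zpow_natCast] at this
      exact key h (-k).toNat (by omega) h2
    · have h2 : Commute h (g ^ k.toNat) := by
        rwa [← Int.toNat_of_nonneg (by omega : (0:ℤ) ≤ k), zpow_natCast] at hcom
      exact key h k.toNat (by omega) h2
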